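/- Let V be a finite-dimensional vector space over 𝕂 (𝕂 = ℝ or ℂ) with dim V ≥ 2, let f be a continuous subnorm on V, fix a nonzero a₀ ∈ V, and let W = {α·a₀ : α ∈ 𝕂} be the one-dimensional subspace generated by a₀. For a real number κ > 1, define g_κ(a) = κ·f(a) if a ∈ W and g_κ(a) = f(a) if a ∈ V ∖ W. Then g_κ is a subnorm on V, and g_κ is discontinuous at a₀. -/
import Mathlib


/-- Let `f` be a continuous subnorm on a finite-dimensional vector space `V` over `𝕂`
(`𝕂 = ℝ` or `ℂ`) with `dim V ≥ 2`, let `a₀ ≠ 0`, `W = span {a₀}`, and `κ > 1`.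
Then `g`, equal to `κ * f` on `W` and to `f` off `W`, is a subnorm on `V`
which is discontinuous at `a₀`. -/
theorem scaled_subnorm_discontinuous
    {𝕂 : Type*} [RCLike 𝕂] {V : Type*} [NormedAddCommGroup V] [NormedSpace 𝕂 V]
    [FiniteDimensional 𝕂 V] (hdim : 2 ≤ Module.finrank 𝕂 V)
    (f : V → ℝ)
    (hf_pos : ∀ a : V, a ≠ 0 → 0 < f a)
    (hf_smul : ∀ (α : 𝕂) (a : V), f (α • a) = ‖α‖ * f a)
    (hf_cont : Continuous f)
    (a₀ : V) (ha₀ : a₀ ≠ 0) (κ : ℝ) (hκ : 1 < κ)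
    (g : V → ℝ)
    (hg_on : ∀ a ∈ Submodule.span 𝕂 {a₀}, g a = κ * f a)
    (hg_off : ∀ a ∉ Submodule.span 𝕂 {a₀}, g a = f a) :
    (∀ a : V, a ≠ 0 → 0 < g a) ∧
      (∀ (α : 𝕂) (a : V), g (α • a) = ‖α‖ * g a) ∧
      ¬ ContinuousAt g a₀ := by
  have hf0 : f 0 = 0 := by
    have := hf_smul 0 0
    simpa using this
  have hg0 : g 0 = 0 := by
    rw [hg_on 0 (Submodule.zero_mem _), hf0, mul_zero]
  have hpos : ∀ a : V, a ≠ 0 → 0 < g a := by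
    intro a ha
    by_cases h : a ∈ Submodule.span 𝕂 {a₀}
    · rw [hg_on a h]
      exact mul_pos (lt_trans one_pos hκ) (hf_pos a ha)
    · rw [hg_off a h]; exact hf_pos a ha
  have hmem_iff : ∀ (α : 𝕂) (a : V), α ≠ 0 →
      (α • a ∈ Submodule.span 𝕂 {a₀} ↔ a ∈ Submodule.span 𝕂 {a₀}) := by
    intro α a hα
    constructor
    · intro h
      have := Submodule.smul_mem _ α⁻¹ h
      rwa [inv_smul_smul₀ hα] at this
    · intro h; exact Submodule.smul_mem _ α h
  have hsmul : ∀ (α : 𝕂) (a : V), g (α • a) = ‖α‖ * g a := by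
    intro α a
    by_cases hα : α = 0
    · simp [hα, hg0]
    by_cases h : a ∈ Submodule.span 𝕂 {a₀}
    · rw [hg_on _ ((hmem_iff α a hα).mpr h), hg_on a h, hf_smul]; ring
    · rw [hg_off _ (fun hc => h ((hmem_iff α a hα).mp hc)), hg_off a h, hf_smul]
  refine ⟨hpos, hsmul, ?_⟩
  -- find b outside the span
  obtain ⟨b, hb⟩ : ∃ b : V, b ∉ Submodule.span 𝕂 {a₀} := by
    by_contra h
    push_neg at h
    have htop : Submodule.span 𝕂 {a₀} = ⊤ := eq_top_iff.mpr fun x _ => h x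
    have h1 : Module.finrank 𝕂 (Submodule.span 𝕂 {a₀}) = 1 :=
      finrank_span_singleton ha₀
    rw [htop, finrank_top] at h1
    omega
  intro hcont
  set c : ℕ → 𝕂 := fun n => ((1 / (n + 1 : ℝ) : ℝ) : 𝕂) with hc
  have hc0 : Filter.Tendsto c Filter.atTop (nhds 0) := by
    have := (RCLike.continuous_ofReal (K := 𝕂)).tendsto (0 : ℝ)
    have h2 := this.comp tendsto_one_div_add_atTop_nhds_zero_nat
    simpa [hc, Function.comp_def, one_div] using h2
  have hcne : ∀ n : ℕ, c n ≠ 0 := by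
    intro n
    simp only [hc, ne_eq, RCLike.ofReal_eq_zero]
    positivity
  set u : ℕ → V := fun n => a₀ + c n • b with hu
  have ha₀mem : a₀ ∈ Submodule.span 𝕂 {a₀} := Submodule.mem_span_singleton_self a₀
  have hune : ∀ n, u n ∉ Submodule.span 𝕂 {a₀} := by
    intro n hn
    apply hb
    have h1 : c n • b ∈ Submodule.span 𝕂 {a₀} := by
      have := Submodule.sub_mem _ hn ha₀mem
      simpa [hu] using this
    have := Submodule.smul_mem _ (c n)⁻¹ h1
    rwa [inv_smul_smul₀ (hcne n)] at this
  have hutend : Filter.Tendsto u Filter.atTop (nhds a₀) := by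
    have : Filter.Tendsto (fun n => c n • b) Filter.atTop (nhds ((0 : 𝕂) • b)) :=
      hc0.smul_const b
    simpa [hu] using tendsto_const_nhds.add this
  have h1 : Filter.Tendsto (fun n => g (u n)) Filter.atTop (nhds (g a₀)) :=
    hcont.tendsto.comp hutend
  have h2 : Filter.Tendsto (fun n => g (u n)) Filter.atTop (nhds (f a₀)) := by
    have : (fun n => g (u n)) = fun n => f (u n) := by
      funext n; exact hg_off _ (hune n)
    rw [this]
    exact (hf_cont.tendsto a₀).comp hutend
  have heq : g a₀ = f a₀ := tendsto_nhds_unique h1 h2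
  rw [hg_on a₀ ha₀mem] at heq
  have := hf_pos a₀ ha₀
  nlinarith
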